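/- Let r and w be positive integers and let G be a digraph. If (T, δ) is a branch decomposition of G of bi-mim-width at most w, then (T, δ), regarded as a branch decomposition of G^r, has bi-mim-width at most r·w. In particular, bimimw(G^r) ≤ r·bimimw(G). -/

import Mathlib

open scoped Classical

/-- An induced matching in a digraph with edge relation `D`: a finite set of edges of `D`,
no two of which share an endpoint, such that no edge of `D` joins an endpoint of one
matching edge to an endpoint of a different matching edge. -/
def IsIndMatching {V : Type} (D : V → V → Prop) (M : Finset (V × V)) : Prop :=
  (∀ e ∈ M, D e.1 e.2) ∧
    ∀ e ∈ M, ∀ f ∈ M, e ≠ f →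
      ∀ x, (x = e.1 ∨ x = e.2) → ∀ y, (y = f.1 ∨ y = f.2) → x ≠ y ∧ ¬D x y

/-- `ν(D)`: the maximum size of an induced matching in the digraph `D`. -/
noncomputable def nu {V : Type} (D : V → V → Prop) : ℕ :=
  sSup {n | ∃ M : Finset (V × V), IsIndMatching D M ∧ M.card = n}

/-- The bipartite digraph `G[A→B]`, whose edges are the edges of `E` from `A` to `B`. -/
def cutRel {V : Type} (E : V → V → Prop) (A B : Set V) : V → V → Prop :=
  fun x y => x ∈ A ∧ y ∈ B ∧ E x y

/-- `bimim_G(A) = ν(G[A→Ā]) + ν(G[Ā→A])`. -/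
noncomputable def bimimCut {V : Type} (E : V → V → Prop) (A : Set V) : ℕ :=
  nu (cutRel E A Aᶜ) + nu (cutRel E Aᶜ A)

/-- For an undirected graph `G`, `mim_G(A) = ν(G[A, Ā])`. -/
noncomputable def mimCut {V : Type} (G : SimpleGraph V) (A : Set V) : ℕ :=
  nu (cutRel G.Adj A Aᶜ)
/-- A caterpillar: a tree containing a path such that every vertex outside the path
has a neighbor on the path. -/
def IsCaterpillar {L : Type} (T : SimpleGraph L) : Prop :=
  ∃ (u v : L) (p : T.Walk u v), p.IsPath ∧
    ∀ w : L, w ∉ p.support → ∃ x ∈ p.support, T.Adj w x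

/-- A branch decomposition of a (di)graph on vertex set `V`: a subcubic tree (at least
two vertices, every internal vertex of degree 3) together with a bijection from `V`
to the set of leaves of the tree. -/
structure BranchDecomp (V : Type) where
  L : Type
  finL : Finite L
  T : SimpleGraph L
  isTree : T.IsTree
  two_le : 2 ≤ Nat.card L
  subcubic : ∀ t : L, (T.neighborSet t).ncard = 1 ∨ (T.neighborSet t).ncard = 3
  toLeaf : V → L
  inj : Function.Injective toLeaf
  mem_leaf : ∀ v : V, (T.neighborSet (toLeaf v)).ncard = 1
  surj : ∀ t : L, (T.neighborSet t).ncard = 1 → ∃ v, toLeaf v = t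

/-- The side `A_e` of the cut induced by the tree edge `{t₁, t₂}`: the set of vertices
mapped to leaves in the component of `T - e` containing `t₁`. -/
def BranchDecomp.side {V : Type} (bd : BranchDecomp V) (t₁ t₂ : bd.L) : Set V :=
  {v | (bd.T.deleteEdges {s(t₁, t₂)}).Reachable t₁ (bd.toLeaf v)}

/-- The bi-mim-width of a branch decomposition with respect to a digraph. -/
noncomputable def BranchDecomp.width {V : Type} (bd : BranchDecomp V)
    (E : V → V → Prop) : ℕ :=
  sSup {n | ∃ t₁ t₂, bd.T.Adj t₁ t₂ ∧ n = bimimCut E (bd.side t₁ t₂)}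

/-- The mim-width of a branch decomposition with respect to an undirected graph. -/
noncomputable def BranchDecomp.uwidth {V : Type} (bd : BranchDecomp V)
    (G : SimpleGraph V) : ℕ :=
  sSup {n | ∃ t₁ t₂, bd.T.Adj t₁ t₂ ∧ n = mimCut G (bd.side t₁ t₂)}

/-- The bi-mim-width of a digraph. -/
noncomputable def bimimw {V : Type} (E : V → V → Prop) : ℕ :=
  sInf {n | ∃ bd : BranchDecomp V, bd.width E = n}

/-- The linear bi-mim-width of a digraph. -/
noncomputable def lbimimw {V : Type} (E : V → V → Prop) : ℕ :=
  sInf {n | ∃ bd : BranchDecomp V, IsCaterpillar bd.T ∧ bd.width E = n}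

/-- The mim-width of an undirected graph. -/
noncomputable def mimw {V : Type} (G : SimpleGraph V) : ℕ :=
  sInf {n | ∃ bd : BranchDecomp V, bd.uwidth G = n}

/-- The linear mim-width of an undirected graph. -/
noncomputable def lmimw {V : Type} (G : SimpleGraph V) : ℕ :=
  sInf {n | ∃ bd : BranchDecomp V, IsCaterpillar bd.T ∧ bd.uwidth G = n}
/-- The `r`-th power of a digraph: there is an edge `(x, y)` whenever there is a
directed path of length at least 1 and at most `r` from `x` to `y`. -/
def dipower {V : Type} (E : V → V → Prop) (r : ℕ) : V → V → Prop :=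
  fun x y => ∃ (k : ℕ) (p : Fin (k + 1) → V), 1 ≤ k ∧ k ≤ r ∧
    Function.Injective p ∧ (∀ i : Fin k, E (p i.castSucc) (p i.succ)) ∧
    p 0 = x ∧ p (Fin.last k) = y


section Helpers

variable {V : Type}

lemma two_le_length_of_ne {x y : V} {l : List V} (hxy : x ≠ y)
    (hh : l.head? = some x) (hl : l.getLast? = some y) : 2 ≤ l.length := by
  match l with
  | [] => simp at hh
  | [a] =>
    simp at hh hl
    exact absurd (hh.symm.trans hl) hxy
  | a :: b :: t => simp [List.length]

lemma chain'_getElem? {E : V → V → Prop} {l : List V} (hc : l.Chain' E) {i : ℕ}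
    {a b : V} (ha : l[i]? = some a) (hb : l[i+1]? = some b) : E a b := by
  obtain ⟨h1, e1⟩ := List.getElem?_eq_some_iff.mp ha
  obtain ⟨h2, e2⟩ := List.getElem?_eq_some_iff.mp hb
  have := List.isChain_iff_getElem.mp hc i (by omega)
  simpa [List.get_eq_getElem, e1, e2] using this

lemma dipower_of_goodwalk (E : V → V → Prop) (r : ℕ) :
    ∀ (n : ℕ) (l : List V) (x y : V), l.length ≤ n → x ≠ y → l.Chain' E →
      l.head? = some x → l.getLast? = some y → 2 ≤ l.length → l.length ≤ r + 1 →
      dipower E r x y := by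
  intro n
  induction n with
  | zero => intro l x y h1 _ _ _ _ h2 _; omega
  | succ n ih =>
    intro l x y hn hxy hc hh hl h2 hrl
    have h0x : l[0]? = some x := by rwa [← List.head?_eq_getElem?]
    have hly : l[l.length - 1]? = some y := by rwa [← List.getLast?_eq_getElem?]
    by_cases hnd : l.Nodup
    · obtain ⟨k, hk⟩ : ∃ k, l.length = k + 1 := ⟨l.length - 1, by omega⟩
      refine ⟨k, fun i => l.get (Fin.cast hk.symm i), by omega, by omega, ?_, ?_, ?_, ?_⟩
      · exact (List.nodup_iff_injective_get.mp hnd).comp (Fin.cast_injective hk.symm)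
      · intro i
        exact List.isChain_iff_getElem.mp hc i.1 (by omega)
      · have : l[0]'(by omega) = x := by
          obtain ⟨_, e⟩ := List.getElem?_eq_some_iff.mp h0x; exact e
        simpa [List.get_eq_getElem] using this
      · have : l[l.length - 1]'(by omega) = y := by
          obtain ⟨_, e⟩ := List.getElem?_eq_some_iff.mp hly; exact e
        simp only [List.get_eq_getElem]
        show l[(Fin.last k).1]'_ = y
        simp only [Fin.val_last]
        convert this using 2
        omega
    · have : ¬ Function.Injective l.get := fun h => hnd (List.nodup_iff_injective_get.mpr h)
      simp only [Function.Injective, not_forall] at this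
      obtain ⟨a, b, hab, hne⟩ := this
      -- wlog a.1 < b.1
      obtain ⟨i, j, hij, hjl, heq⟩ : ∃ i j : ℕ, i < j ∧ j < l.length ∧ l[i]? = l[j]? := by
        rcases lt_or_gt_of_ne (fun h : a = b => hne h) with h | h
        · exact ⟨a.1, b.1, h, b.2, by
            simp [List.getElem?_eq_getElem a.2, List.getElem?_eq_getElem b.2,
              ← List.get_eq_getElem, hab]⟩
        · exact ⟨b.1, a.1, h, a.2, by
            simp [List.getElem?_eq_getElem a.2, List.getElem?_eq_getElem b.2,
              ← List.get_eq_getElem, hab]⟩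
      by_cases hj1 : j + 1 = l.length
      · -- truncate: l' = take (i+1) l
        have hi1 : 1 ≤ i := by
          by_contra h
          have hi0 : i = 0 := by omega
          rw [hi0] at heq
        -- heq : l[0]? = l[j]?  and l[j]? = l[length-1]? = some y, l[0]? = some x
          have : some x = some y := by
            rw [← h0x] at *
            rw [heq]
            have : j = l.length - 1 := by omega
            rw [this, hly]
          exact hxy (Option.some_injective _ this)
        apply ih (l.take (i+1)) x y
        · rw [List.length_take]; omega
        · exact hxy
        · exact hc.take _
        · rw [List.head?_eq_getElem?, List.getElem?_take]
          simpa [Nat.lt_succ] using h0x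
        · rw [List.getLast?_eq_getElem?, List.length_take]
          have hmin : (i+1) ⊓ l.length = i + 1 := by omega
          rw [hmin, List.getElem?_take]
          simp only [Nat.add_sub_cancel, lt_add_iff_pos_right, Nat.lt_irrefl, if_pos (by omega : i < i+1)]
          rw [heq]
          have : j = l.length - 1 := by omega
          rw [this, hly]
          simp
        · rw [List.length_take]; omega
        · rw [List.length_take]; omega
      · -- splice: l' = take (i+1) l ++ drop (j+1) l
        have hjj : j + 1 < l.length := by omega
        set l' := l.take (i+1) ++ l.drop (j+1) with hl'
        have hlen : l'.length = (i+1) + (l.length - (j+1)) := by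
          rw [List.length_append, List.length_take, List.length_drop]; omega
        have htklast : (l.take (i+1)).getLast? = l[j]? := by
          rw [List.getLast?_eq_getElem?, List.length_take]
          have hmin : (i+1) ⊓ l.length = i + 1 := by omega
          rw [hmin, List.getElem?_take]
          rw [if_pos (by omega : i + 1 - 1 < i + 1)]
          simp only [Nat.add_sub_cancel]
          exact heq
        have hdrophead : (l.drop (j+1)).head? = l[j+1]? := List.head?_drop
        have hh' : l'.head? = some x := by
          rw [hl', List.head?_append, List.head?_eq_getElem?, List.getElem?_take,
            if_pos (by omega : 0 < i+1), h0x]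
          rfl
        have hl'' : l'.getLast? = some y := by
          rw [hl', List.getLast?_append, List.getLast?_eq_getElem?, List.length_drop,
            List.getElem?_drop]
          have : j + 1 + (l.length - (j+1) - 1) = l.length - 1 := by omega
          rw [this, hly]
          rfl
        apply ih l' x y
        · omega
        · exact hxy
        · rw [hl']
          refine List.isChain_append.mpr ⟨hc.take _, hc.drop _, ?_⟩
          intro u hu v hv
          rw [htklast] at hu
          rw [hdrophead] at hv
          have hju : l[j]? = some u := hu
          have hjv : l[j+1]? = some v := hv
          exact chain'_getElem? hc hju hjv
        · exact hh'
        · exact hl''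
        · exact two_le_length_of_ne hxy hh' hl''
        · omega

lemma goodwalk_of_dipower {E : V → V → Prop} {r : ℕ} {x y : V}
    (h : dipower E r x y) :
    ∃ l : List V, l.Chain' E ∧ l.head? = some x ∧ l.getLast? = some y ∧
      2 ≤ l.length ∧ l.length ≤ r + 1 := by
  obtain ⟨k, p, hk1, hkr, -, hchain, h0, hlast⟩ := h
  have hlen : (List.ofFn p).length = k + 1 := List.length_ofFn
  refine ⟨List.ofFn p, ?_, ?_, ?_, by omega, by omega⟩
  · apply List.isChain_iff_getElem.mpr
    intro i hi
    simp only [List.get_eq_getElem, List.getElem_ofFn]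
    exact hchain ⟨i, by omega⟩
  · rw [List.ofFn_succ]
    simp [h0]
  · rw [List.getLast?_eq_getElem?, hlen]
    simp only [Nat.add_sub_cancel]
    rw [List.getElem?_eq_getElem (by omega), List.getElem_ofFn]
    rw [show (⟨k, by omega⟩ : Fin (k+1)) = Fin.last k from rfl, hlast]

lemma card_le_nu [Fintype V] {D : V → V → Prop} {M : Finset (V × V)}
    (h : IsIndMatching D M) : M.card ≤ nu D :=
  le_csSup ⟨Fintype.card (V × V), fun n ⟨N, _, hN⟩ => hN ▸ Finset.card_le_univ N⟩
    ⟨M, h, rfl⟩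

lemma nu_le [Fintype V] {D : V → V → Prop} {b : ℕ}
    (h : ∀ M : Finset (V × V), IsIndMatching D M → M.card ≤ b) : nu D ≤ b :=
  csSup_le' (fun n ⟨M, hM, hc⟩ => hc ▸ h M hM)

lemma nu_le_card [Fintype V] (D : V → V → Prop) : nu D ≤ Fintype.card (V × V) :=
  nu_le fun M _ => Finset.card_le_univ M

lemma nu_dipower_cut_le [Fintype V] (E : V → V → Prop) {r : ℕ} (hr : 1 ≤ r)
    (S : Set V) : nu (cutRel (dipower E r) S Sᶜ) ≤ r * nu (cutRel E S Sᶜ) := by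
  apply nu_le
  intro M hM
  have hdata : ∀ e : V × V, ∃ (l : List V) (j : ℕ) (a b : V), e ∈ M →
      l.Chain' E ∧ l.head? = some e.1 ∧ l.getLast? = some e.2 ∧ 2 ≤ l.length ∧
      l.length ≤ r + 1 ∧ 1 ≤ j ∧ j < l.length ∧ l[j-1]? = some a ∧ l[j]? = some b ∧
      a ∈ S ∧ b ∉ S ∧ E a b := by
    intro e
    by_cases he : e ∈ M
    · obtain ⟨h1, h2, hP⟩ := hM.1 e he
      obtain ⟨l, hc, hh, hl, h2l, hrl⟩ := goodwalk_of_dipower hP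
      have h0x : l[0]? = some e.1 := by rwa [← List.head?_eq_getElem?]
      have hly : l[l.length - 1]? = some e.2 := by rwa [← List.getLast?_eq_getElem?]
      have hex : ∃ j, j < l.length ∧ ∀ z, l[j]? = some z → z ∉ S := by
        refine ⟨l.length - 1, by omega, ?_⟩
        intro z hz
        rw [hly] at hz
        cases hz
        exact h2
      obtain ⟨hjl, hjS⟩ := Nat.find_spec hex
      set j := Nat.find hex with hjdef
      have hj1 : 1 ≤ j := by
        by_contra h
        have h0 : j = 0 := by omega
        exact hjS e.1 (by rw [h0]; exact h0x) h1
      have hjm : ¬ (j - 1 < l.length ∧ ∀ z, l[j-1]? = some z → z ∉ S) :=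
        Nat.find_min hex (by omega)
      push_neg at hjm
      obtain ⟨a, ha, haS⟩ := hjm (by omega)
      obtain ⟨b, hb⟩ : ∃ b, l[j]? = some b := ⟨l[j]'hjl, List.getElem?_eq_getElem hjl⟩
      have hEab : E a b := by
        have hj' : (j - 1) + 1 = j := by omega
        exact chain'_getElem? hc ha (by rwa [hj'])
      exact ⟨l, j, a, b, fun _ => ⟨hc, hh, hl, h2l, hrl, hj1, hjl, ha, hb,
        haS, hjS b hb, hEab⟩⟩
    · exact ⟨[], 1, e.1, e.1, fun h => absurd h he⟩
  choose L J XA YB hQ using hdata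
  have hcross : ∀ e ∈ M, ∀ f ∈ M, e ≠ f → J e = J f → ¬ E (XA e) (YB f) := by
    intro e he f hf hef hJ hE
    obtain ⟨ce, hhe, hle, h2e, hre, hj1e, hjle, hxe, hye, hxSe, hySe, hEe⟩ := hQ e he
    obtain ⟨cf, hhf, hlf, h2f, hrf, hj1f, hjlf, hxf, hyf, hxSf, hySf, hEf⟩ := hQ f hf
    obtain ⟨hne, hnD⟩ := hM.2 e he f hf hef e.1 (Or.inl rfl) f.2 (Or.inr rfl)
    apply hnD
    refine ⟨(hM.1 e he).1, (hM.1 f hf).2.1, ?_⟩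
    set l' := (L e).take (J e) ++ (L f).drop (J f) with hl'
    have hminle : J e ⊓ (L e).length = J e := min_eq_left (by omega)
    have hlen : l'.length = (L f).length := by
      rw [hl', List.length_append, List.length_take, List.length_drop, hminle, hJ]
      omega
    have htkh : ((L e).take (J e)).head? = some e.1 := by
      rw [List.head?_eq_getElem?, List.getElem?_take, if_pos (by omega : 0 < J e),
        ← List.head?_eq_getElem?]
      exact hhe
    have hdl : ((L f).drop (J f)).getLast? = some f.2 := by
      rw [List.getLast?_eq_getElem?, List.length_drop, List.getElem?_drop]
      have hidx : J f + ((L f).length - J f - 1) = (L f).length - 1 := by omega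
      rw [hidx, ← List.getLast?_eq_getElem?]
      exact hlf
    have hh' : l'.head? = some e.1 := by
      rw [hl', List.head?_append, htkh]
      rfl
    have hl'' : l'.getLast? = some f.2 := by
      rw [hl', List.getLast?_append, hdl]
      rfl
    have hc' : l'.Chain' E := by
      rw [hl']
      refine List.isChain_append.mpr ⟨ce.take _, cf.drop _, ?_⟩
      intro u hu v hv
      have hu' : ((L e).take (J e)).getLast? = some (XA e) := by
        rw [List.getLast?_eq_getElem?, List.length_take, hminle, List.getElem?_take,
          if_pos (by omega : J e - 1 < J e)]
        exact hxe
      have hv' : ((L f).drop (J f)).head? = some (YB f) := by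
        rw [List.head?_drop]
        exact hyf
      rw [hu'] at hu
      rw [hv'] at hv
      obtain rfl := Option.mem_some_iff.mp hu
      obtain rfl := Option.mem_some_iff.mp hv
      exact hE
    exact dipower_of_goodwalk E r l'.length l' e.1 f.2 le_rfl hne hc' hh' hl''
      (two_le_length_of_ne hne hh' hl'') (by omega)
  have hTmem : ∀ e ∈ M, J e - 1 ∈ Finset.range r := by
    intro e he
    obtain ⟨-, -, -, -, hre, hj1e, hjle, -⟩ := hQ e he
    exact Finset.mem_range.mpr (by omega)
  rw [Finset.card_eq_sum_card_fiberwise hTmem]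
  have hfiber : ∀ t ∈ Finset.range r,
      (M.filter (fun e => J e - 1 = t)).card ≤ nu (cutRel E S Sᶜ) := by
    intro t ht
    set F := M.filter (fun e => J e - 1 = t) with hF
    have hFM : ∀ e ∈ F, e ∈ M := fun e he => (Finset.mem_filter.mp he).1
    have hJF : ∀ e ∈ F, ∀ f ∈ F, J e = J f := by
      intro e he f hf
      have h1 := (Finset.mem_filter.mp he).2
      have h2 := (Finset.mem_filter.mp hf).2
      obtain ⟨-, -, -, -, -, hj1e, -⟩ := hQ e (hFM e he)
      obtain ⟨-, -, -, -, -, hj1f, -⟩ := hQ f (hFM f hf)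
      omega
    have hginj : Set.InjOn (fun e => (XA e, YB e)) ↑F := by
      intro e he f hf hgef
      by_contra hef
      simp only [Prod.mk.injEq] at hgef
      have heF : e ∈ F := he
      have hfF : f ∈ F := hf
      obtain ⟨-, -, -, -, -, -, -, -, -, -, -, hEe⟩ := hQ e (hFM e heF)
      exact hcross e (hFM e heF) f (hFM f hfF) hef (hJF e heF f hfF)
        (by rw [← hgef.2]; exact hEe)
    have hmatch : IsIndMatching (cutRel E S Sᶜ) (F.image (fun e => (XA e, YB e))) := by
      constructor
      · rintro e' he'
        obtain ⟨e, he, rfl⟩ := Finset.mem_image.mp he'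
        obtain ⟨-, -, -, -, -, -, -, -, -, hxS, hyS, hEe⟩ := hQ e (hFM e he)
        exact ⟨hxS, hyS, hEe⟩
      · rintro e' he' f' hf' hne' u hu v hv
        obtain ⟨e, he, rfl⟩ := Finset.mem_image.mp he'
        obtain ⟨f, hf, rfl⟩ := Finset.mem_image.mp hf'
        have hef : e ≠ f := fun h => hne' (by rw [h])
        have hJ := hJF e he f hf
        have hceEf := hcross e (hFM e he) f (hFM f hf) hef hJ
        have hcfEe := hcross f (hFM f hf) e (hFM e he) hef.symm hJ.symm
        obtain ⟨-, -, -, -, -, -, -, -, -, hxSe, hySe, hEe⟩ := hQ e (hFM e he)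
        obtain ⟨-, -, -, -, -, -, -, -, -, hxSf, hySf, hEf⟩ := hQ f (hFM f hf)
        simp only at hu hv
        rcases hu with rfl | rfl <;> rcases hv with rfl | rfl
        · refine ⟨fun h => hceEf (by rw [h]; exact hEf), ?_⟩
          rintro ⟨-, hvS, -⟩
          exact hvS hxSf
        · exact ⟨fun h => hySf (by rw [← h]; exact hxSe), fun h => hceEf h.2.2⟩
        · refine ⟨fun h => hySe (by rw [h]; exact hxSf), ?_⟩
          rintro ⟨huS, -, -⟩
          exact hySe huS
        · refine ⟨fun h => hceEf (by rw [← h]; exact hEe), ?_⟩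
          rintro ⟨huS, -, -⟩
          exact hySe huS
    calc F.card = (F.image (fun e => (XA e, YB e))).card :=
          (Finset.card_image_of_injOn hginj).symm
      _ ≤ nu (cutRel E S Sᶜ) := card_le_nu hmatch
  calc ∑ t ∈ Finset.range r, (M.filter (fun e => J e - 1 = t)).card
      ≤ ∑ _t ∈ Finset.range r, nu (cutRel E S Sᶜ) := Finset.sum_le_sum hfiber
    _ = r * nu (cutRel E S Sᶜ) := by
        rw [Finset.sum_const, Finset.card_range, smul_eq_mul]

lemma bimimCut_dipower_le [Fintype V] (E : V → V → Prop) {r : ℕ} (hr : 1 ≤ r)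
    (A : Set V) : bimimCut (dipower E r) A ≤ r * bimimCut E A := by
  have h1 := nu_dipower_cut_le E hr A
  have h2 := nu_dipower_cut_le E hr Aᶜ
  rw [compl_compl] at h2
  calc bimimCut (dipower E r) A = nu (cutRel (dipower E r) A Aᶜ) + nu (cutRel (dipower E r) Aᶜ A) := rfl
    _ ≤ r * nu (cutRel E A Aᶜ) + r * nu (cutRel E Aᶜ A) := Nat.add_le_add h1 h2
    _ = r * bimimCut E A := by rw [bimimCut, Nat.mul_add]

lemma width_dipower_le [Fintype V] (bd : BranchDecomp V) (E : V → V → Prop) {r : ℕ}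
    (hr : 1 ≤ r) : bd.width (dipower E r) ≤ r * bd.width E := by
  apply csSup_le'
  rintro n ⟨t1, t2, hadj, rfl⟩
  have hb : bimimCut E (bd.side t1 t2) ≤ bd.width E := by
    apply le_csSup
    · refine ⟨2 * Fintype.card (V × V), ?_⟩
      rintro m ⟨s1, s2, -, rfl⟩
      have := Nat.add_le_add (nu_le_card (cutRel E (bd.side s1 s2) (bd.side s1 s2)ᶜ))
        (nu_le_card (cutRel E (bd.side s1 s2)ᶜ (bd.side s1 s2)))
      unfold bimimCut
      omega
    · exact ⟨t1, t2, hadj, rfl⟩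
  calc bimimCut (dipower E r) (bd.side t1 t2) ≤ r * bimimCut E (bd.side t1 t2) :=
        bimimCut_dipower_le E hr _
    _ ≤ r * bd.width E := Nat.mul_le_mul_left r hb

end Helpers

theorem stmt_7 {V : Type} [Fintype V] (E : V → V → Prop) (r w : ℕ)
    (hr : 1 ≤ r) (hw : 1 ≤ w) :
    (∀ bd : BranchDecomp V, bd.width E ≤ w → bd.width (dipower E r) ≤ r * w) ∧
      bimimw (dipower E r) ≤ r * bimimw E := by
  constructor
  · intro bd hbd
    calc bd.width (dipower E r) ≤ r * bd.width E := width_dipower_le bd E hr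
      _ ≤ r * w := Nat.mul_le_mul_left r hbd
  · by_cases hs : {n | ∃ bd : BranchDecomp V, bd.width E = n}.Nonempty
    · obtain ⟨bd, hbd⟩ := Nat.sInf_mem hs
      calc bimimw (dipower E r) ≤ bd.width (dipower E r) :=
            Nat.sInf_le ⟨bd, rfl⟩
        _ ≤ r * bd.width E := width_dipower_le bd E hr
        _ = r * bimimw E := by rw [hbd, bimimw]
    · have he : {n | ∃ bd : BranchDecomp V, bd.width (dipower E r) = n} = ∅ := by
        rw [Set.eq_empty_iff_forall_notMem]
        rintro n ⟨bd, -⟩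
        exact hs ⟨bd.width E, bd, rfl⟩
      rw [bimimw, he, Nat.sInf_empty]
      exact Nat.zero_le _
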